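/- Suppose v_m^k solves the Hamilton–Jacobi scheme (2.3) and u_m^k := D_x v_{m+1}^k satisfies the CFL condition |H_p(x_m,t_k,c+u_m^k)| < λ⁻¹ for all m and all 0 ≤ k ≤ k*. Then for each n and each 0 < l+1 ≤ k*+1, v_n^{l+1} = inf_ξ E_n^{l+1}(ξ), where the infimum is over velocity fields ξ : G → [−λ⁻¹,λ⁻¹] for the walks from (x_n,t_{l+1}); the minimizing velocity field ξ* exists, is unique, and is given by ξ*_m^{k+1} = H_p(x_m, t_k, c + D_x v_{m+1}^k). -/

import Mathlib

open scoped BigOperators Classical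

noncomputable section

def dx (N : ℕ) : ℝ := 1 / (2 * N)

/-- Time mesh `Δt = 1/(2K)`. -/
def dt (K : ℕ) : ℝ := 1 / (2 * K)

/-- Hyperbolic ratio `λ = Δt/Δx`. -/
def lam (N K : ℕ) : ℝ := dt K / dx N

/-- Position (in units of `Δx`, i.e. the integer index `m`) at time step `k` of the backward
random walk starting at `x_n` at time `t_{l+1}`, whose step from time `j+1` down to time `j`
is `+Δx` if `s j = true` and `-Δx` otherwise. -/
def pos (n : ℤ) (l : ℕ) (s : Fin (l + 1) → Bool) (k : ℕ) : ℤ :=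
  n + ∑ j : Fin (l + 1), if k ≤ (j : ℕ) then (if s j then 1 else -1) else 0

/-- The probability density `μ(γ;ξ)` of the path encoded by `s`: the product over all backward
steps of the transition probability `1/2 - (λ/2)ξ` (step `+Δx`) or `1/2 + (λ/2)ξ` (step `-Δx`),
where `ξ` is evaluated at the grid point `(γ^{j+1}, t_{j+1})` from which the step is taken. -/
def walkMeasure (N K : ℕ) (n : ℤ) (l : ℕ) (ξ : ℤ → ℕ → ℝ) (s : Fin (l + 1) → Bool) : ℝ :=
  ∏ j : Fin (l + 1),
    (if s j then 1 / 2 - lam N K / 2 * ξ (pos n l s ((j : ℕ) + 1)) ((j : ℕ) + 1)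
     else 1 / 2 + lam N K / 2 * ξ (pos n l s ((j : ℕ) + 1)) ((j : ℕ) + 1))

/-- `p_m^k`: the total mass of paths sitting at `x_m` at time `t_k`. -/
def pmass (N K : ℕ) (n : ℤ) (l : ℕ) (ξ : ℤ → ℕ → ℝ) (m : ℤ) (k : ℕ) : ℝ :=
  ∑ s : Fin (l + 1) → Bool, if pos n l s k = m then walkMeasure N K n l ξ s else 0

/-- The discretized initial datum (2.2): `u_Δ^0(x)` is the cell average of `u^0` over
`[x_m - Δx, x_m + Δx)`, where `m = m(x)` is the even integer with `x ∈ [x_m - Δx, x_m + Δx)`. -/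
def uD0 (N : ℕ) (u0 : ℝ → ℝ) (x : ℝ) : ℝ :=
  (1 / (2 * dx N)) *
    ∫ y in (((2 * ⌊(x / dx N + 1) / 2⌋ : ℤ) : ℝ) * dx N - dx N)..(((2 * ⌊(x / dx N + 1) / 2⌋ : ℤ) : ℝ) * dx N + dx N),
      u0 y

/-- The discretized initial datum (2.4): `v_Δ^0(x) = v^0(0) + ∫_0^x u_Δ^0(y) dy`. -/
def vD0 (N : ℕ) (u0 v0 : ℝ → ℝ) (x : ℝ) : ℝ :=
  v0 0 + ∫ y in (0:ℝ)..x, uD0 N u0 y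

/-- `u` solves the Lax–Friedrichs scheme (2.1) on the even grid, with initial datum
`u_m^0 = uinit(x_m)` and `2N`-periodicity. -/
def SolvesLF (N K : ℕ) (H : ℝ → ℝ → ℝ → ℝ) (c : ℝ) (uinit : ℝ → ℝ) (u : ℤ → ℕ → ℝ) : Prop :=
  (∀ m : ℤ, Even m → u m 0 = uinit ((m : ℝ) * dx N)) ∧
  (∀ (m : ℤ) (k : ℕ), u (m + 2 * N) k = u m k) ∧
  (∀ (m : ℤ) (k : ℕ), Even (m + (k : ℤ)) →
    (u (m + 1) (k + 1) - (u m k + u (m + 2) k) / 2) / dt K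
      + (H (((m : ℝ) + 2) * dx N) ((k : ℝ) * dt K) (c + u (m + 2) k)
          - H ((m : ℝ) * dx N) ((k : ℝ) * dt K) (c + u m k)) / (2 * dx N) = 0)

/-- `v` solves the Hamilton–Jacobi scheme (2.3) on the odd grid, with initial datum
`v_{m+1}^0 = vinit(x_{m+1})` and `2N`-periodicity. -/
def SolvesHJ (N K : ℕ) (H : ℝ → ℝ → ℝ → ℝ) (c hc : ℝ) (vinit : ℝ → ℝ) (v : ℤ → ℕ → ℝ) : Prop :=
  (∀ m : ℤ, Odd m → v m 0 = vinit ((m : ℝ) * dx N)) ∧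
  (∀ (m : ℤ) (k : ℕ), v (m + 2 * N) k = v m k) ∧
  (∀ (m : ℤ) (k : ℕ), Even (m + (k : ℤ)) →
    (v m (k + 1) - (v (m - 1) k + v (m + 1) k) / 2) / dt K
      + H ((m : ℝ) * dx N) ((k : ℝ) * dt K) (c + (v (m + 1) k - v (m - 1) k) / (2 * dx N)) = hc)


/-- The Legendre transform `L(x,t,ξ) = sup_p {ξp - H(x,t,p)}`. -/
def Leg (H : ℝ → ℝ → ℝ → ℝ) (x t ξ : ℝ) : ℝ := ⨆ p : ℝ, (ξ * p - H x t p)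

/-- `L^c(x,t,ξ) = L(x,t,ξ) - cξ`. -/
def LegC (H : ℝ → ℝ → ℝ → ℝ) (c x t ξ : ℝ) : ℝ := Leg H x t ξ - c * ξ

/-- A velocity field is admissible when its values lie in `[-λ⁻¹, λ⁻¹]`. -/
def Adm (N K : ℕ) (ξ : ℤ → ℕ → ℝ) : Prop := ∀ m k, |ξ m k| ≤ (lam N K)⁻¹

/-- `(x_m, t_k)` belongs to the grid `G` of points reachable by walks from `(x_n, t_{l+1})`:
`1 ≤ k ≤ l+1`, odd parity, and `|x_m - x_n| ≤ (l+1-k)Δx`. -/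
def inG (n : ℤ) (l : ℕ) (m : ℤ) (k : ℕ) : Prop :=
  1 ≤ k ∧ k ≤ l + 1 ∧ Odd (m + (k : ℤ)) ∧ |m - n| ≤ (l : ℤ) + 1 - (k : ℤ)

/-- The discrete stochastic action
`E_n^{l+1}(ξ) = E_{μ(·;ξ)}[Σ_{0<k≤l+1} L^c(γ^k, t_{k-1}, ξ^k_{m(γ^k)}) Δt + v_Δ^0(γ^0)] + h(c) t_{l+1}`. -/
def gridAction (N K : ℕ) (H : ℝ → ℝ → ℝ → ℝ) (c hc : ℝ) (vinit : ℝ → ℝ)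
    (n : ℤ) (l : ℕ) (ξ : ℤ → ℕ → ℝ) : ℝ :=
  (∑ s : Fin (l + 1) → Bool, walkMeasure N K n l ξ s *
      ((∑ k ∈ Finset.Icc 1 (l + 1),
          LegC H c ((pos n l s k : ℝ) * dx N) (((k : ℝ) - 1) * dt K) (ξ (pos n l s k) k) * dt K)
        + vinit ((pos n l s 0 : ℝ) * dx N)))
    + hc * (((l : ℝ) + 1) * dt K)


/-! ### Auxiliary lemmas -/

section Aux

variable {H : ℝ → ℝ → ℝ → ℝ}

lemma Hcd (hH_C2 : ContDiff ℝ 2 (fun q : ℝ × ℝ × ℝ => H q.1 q.2.1 q.2.2)) (x t : ℝ) :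
    ContDiff ℝ 2 (H x t) := by
  have : (H x t) = (fun q : ℝ × ℝ × ℝ => H q.1 q.2.1 q.2.2) ∘ (fun p => (x, t, p)) := rfl
  rw [this]
  exact hH_C2.comp ((contDiff_const.prodMk (contDiff_const.prodMk contDiff_id)))

lemma Hdiff (hH_C2 : ContDiff ℝ 2 (fun q : ℝ × ℝ × ℝ => H q.1 q.2.1 q.2.2)) (x t : ℝ) :
    Differentiable ℝ (H x t) :=
  (Hcd hH_C2 x t).differentiable (by norm_num)

lemma HpSM (hH_conv : ∀ x t p, 0 < deriv (deriv (H x t)) p) (x t : ℝ) :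
    StrictMono (deriv (H x t)) :=
  strictMono_of_deriv_pos (hH_conv x t)

lemma Hbdd (hH_C2 : ContDiff ℝ 2 (fun q : ℝ × ℝ × ℝ => H q.1 q.2.1 q.2.2))
    (hH_sl : ∀ x t, Filter.Tendsto (fun p => H x t p / |p|)
      (Filter.comap abs Filter.atTop) Filter.atTop)
    (x t a : ℝ) : ∃ C, ∀ p, a * |p| - H x t p ≤ C := by
  obtain ⟨M, hM⟩ : ∃ M, ∀ p : ℝ, M ≤ |p| → a ≤ H x t p / |p| := by
    have h := (hH_sl x t).eventually (Filter.eventually_ge_atTop a)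
    rw [Filter.eventually_comap, Filter.eventually_atTop] at h
    obtain ⟨M, hM⟩ := h
    exact ⟨M, fun p hp => hM |p| hp p rfl⟩
  set M' := max M 1 with hM'
  have hcont : ContinuousOn (fun p => a * |p| - H x t p) (Set.Icc (-M') M') :=
    ((continuous_const.mul continuous_abs).sub (Hdiff hH_C2 x t).continuous).continuousOn
  obtain ⟨C0, hC0⟩ := (isCompact_Icc.image_of_continuousOn hcont).bddAbove
  refine ⟨C0 ⊔ 0, fun p => ?_⟩
  rcases le_or_gt |p| M' with h | h
  · exact le_trans (hC0 ⟨p, by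
      rw [Set.mem_Icc]
      constructor <;> [linarith [neg_abs_le p]; linarith [le_abs_self p]], rfl⟩) le_sup_left
  · have hp1 : (1:ℝ) ≤ |p| := le_trans (le_max_right M 1) h.le
    have := hM p (le_trans (le_max_left M 1) h.le)
    have : a * |p| ≤ H x t p := by
      rw [← le_div_iff₀ (by linarith : (0:ℝ) < |p|)] at *
      exact this
    simp only [le_sup_iff]; right; linarith

lemma LegBdd (hH_C2 : ContDiff ℝ 2 (fun q : ℝ × ℝ × ℝ => H q.1 q.2.1 q.2.2))
    (hH_sl : ∀ x t, Filter.Tendsto (fun p => H x t p / |p|)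
      (Filter.comap abs Filter.atTop) Filter.atTop)
    (x t ξ : ℝ) : BddAbove (Set.range fun p => ξ * p - H x t p) := by
  obtain ⟨C, hC⟩ := Hbdd hH_C2 hH_sl x t |ξ|
  refine ⟨C, ?_⟩
  rintro y ⟨p, rfl⟩
  calc ξ * p - H x t p ≤ |ξ * p| - H x t p := by linarith [le_abs_self (ξ * p)]
    _ = |ξ| * |p| - H x t p := by rw [abs_mul]
    _ ≤ C := hC p

lemma legUB (hH_C2 : ContDiff ℝ 2 (fun q : ℝ × ℝ × ℝ => H q.1 q.2.1 q.2.2))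
    (hH_sl : ∀ x t, Filter.Tendsto (fun p => H x t p / |p|)
      (Filter.comap abs Filter.atTop) Filter.atTop)
    (x t ξ p : ℝ) : ξ * p - H x t p ≤ Leg H x t ξ :=
  le_ciSup (LegBdd hH_C2 hH_sl x t ξ) p

lemma dualIneq (hH_C2 : ContDiff ℝ 2 (fun q : ℝ × ℝ × ℝ => H q.1 q.2.1 q.2.2))
    (hH_sl : ∀ x t, Filter.Tendsto (fun p => H x t p / |p|)
      (Filter.comap abs Filter.atTop) Filter.atTop)
    (x t ξ q : ℝ) : ξ * q - Leg H x t ξ ≤ H x t q := by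
  linarith [legUB hH_C2 hH_sl x t ξ q]

lemma dualEq (hH_C2 : ContDiff ℝ 2 (fun q : ℝ × ℝ × ℝ => H q.1 q.2.1 q.2.2))
    (hH_conv : ∀ x t p, 0 < deriv (deriv (H x t)) p)
    (hH_sl : ∀ x t, Filter.Tendsto (fun p => H x t p / |p|)
      (Filter.comap abs Filter.atTop) Filter.atTop)
    (x t q : ℝ) :
    Leg H x t (deriv (H x t) q) = deriv (H x t) q * q - H x t q := by
  set ξ := deriv (H x t) q with hξ
  have hg : ∀ p, ξ * p - H x t p ≤ ξ * q - H x t q := by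
    set g : ℝ → ℝ := fun p => ξ * p - H x t p with hgdef
    have hgd : Differentiable ℝ g :=
      (differentiable_const ξ |>.mul differentiable_id).sub (Hdiff hH_C2 x t)
    have hgderiv : ∀ p, deriv g p = ξ - deriv (H x t) p := by
      intro p
      have h1 : HasDerivAt (fun p : ℝ => ξ * p) ξ p := by
        simpa using (hasDerivAt_id p).const_mul ξ
      have h2 : HasDerivAt (H x t) (deriv (H x t) p) p :=
        ((Hdiff hH_C2 x t) p).hasDerivAt
      exact (h1.sub h2).deriv
    have hmono : MonotoneOn g (Set.Iic q) := by
      refine monotoneOn_of_deriv_nonneg (convex_Iic q) hgd.continuous.continuousOn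
        hgd.differentiableOn ?_
      intro p hp
      rw [interior_Iic] at hp
      rw [hgderiv]
      have := (HpSM hH_conv x t) hp.out
      linarith
    have hanti : AntitoneOn g (Set.Ici q) := by
      refine antitoneOn_of_deriv_nonpos (convex_Ici q) hgd.continuous.continuousOn
        hgd.differentiableOn ?_
      intro p hp
      rw [interior_Ici] at hp
      rw [hgderiv]
      have := (HpSM hH_conv x t) hp.out
      linarith
    intro p
    rcases le_total p q with h | h
    · exact hmono h (Set.mem_Iic.2 le_rfl) h
    · exact hanti (Set.mem_Ici.2 le_rfl) h h
  exact le_antisymm (ciSup_le hg) (le_ciSup (LegBdd hH_C2 hH_sl x t ξ) q)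

lemma dualUnique (hH_C2 : ContDiff ℝ 2 (fun q : ℝ × ℝ × ℝ => H q.1 q.2.1 q.2.2))
    (hH_sl : ∀ x t, Filter.Tendsto (fun p => H x t p / |p|)
      (Filter.comap abs Filter.atTop) Filter.atTop)
    (x t ξ q : ℝ) (h : ξ * q - Leg H x t ξ = H x t q) : ξ = deriv (H x t) q := by
  have hub : ∀ p, ξ * p - H x t p ≤ ξ * q - H x t q := by
    intro p
    have := legUB hH_C2 hH_sl x t ξ p
    linarith
  set ψ : ℝ → ℝ := fun p => H x t p - ξ * p with hψdef
  have hmin : IsLocalMin ψ q := by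
    apply Filter.Eventually.of_forall
    intro p
    have := hub p
    simp only [hψdef]
    linarith
  have hd := hmin.deriv_eq_zero
  have h1 : HasDerivAt (fun p : ℝ => ξ * p) ξ q := by
    simpa using (hasDerivAt_id q).const_mul ξ
  have h2 : HasDerivAt (H x t) (deriv (H x t) q) q := ((Hdiff hH_C2 x t) q).hasDerivAt
  have := (h2.sub h1).deriv
  rw [hψdef] at hd
  rw [show (fun p => H x t p - ξ * p) = (H x t - fun p => ξ * p) from rfl, this] at hd
  linarith

end Aux

/-! ### Random-walk recursion lemmas -/

lemma pos_top (n : ℤ) (l : ℕ) (s : Fin (l+1) → Bool) : pos n l s (l+1) = n := by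
  unfold pos
  rw [Finset.sum_eq_zero, add_zero]
  intro j _
  rw [if_neg]
  have := j.2
  omega

lemma pos_snoc (n : ℤ) (l : ℕ) (s' : Fin (l+1) → Bool) (b : Bool) (k : ℕ) (hk : k ≤ l + 1) :
    pos n (l+1) (Fin.snoc s' b) k = pos (n + if b then 1 else -1) l s' k := by
  unfold pos
  rw [Fin.sum_univ_castSucc]
  simp only [Fin.snoc_castSucc, Fin.snoc_last, Fin.coe_castSucc, Fin.val_last]
  rw [if_pos hk]
  ring

lemma walk_snoc (N K : ℕ) (n : ℤ) (l : ℕ) (ξ : ℤ → ℕ → ℝ) (s' : Fin (l+1) → Bool) (b : Bool) :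
    walkMeasure N K n (l+1) ξ (Fin.snoc s' b) =
      (if b then 1/2 - lam N K/2 * ξ n (l+2) else 1/2 + lam N K/2 * ξ n (l+2)) *
        walkMeasure N K (n + if b then 1 else -1) l ξ s' := by
  unfold walkMeasure
  rw [Fin.prod_univ_castSucc]
  simp only [Fin.snoc_castSucc, Fin.snoc_last, Fin.coe_castSucc, Fin.val_last]
  rw [mul_comm]
  congr 1
  · have hlast : pos n (l+1) (Fin.snoc s' b) (l+1+1) = n := pos_top n (l+1) (Fin.snoc s' b)
    rw [hlast]
  · apply Finset.prod_congr rfl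
    intro j _
    rw [pos_snoc n l s' b ((j:ℕ)+1) (by omega)]

lemma snocEquiv_apply (l : ℕ) (b : Bool) (s' : Fin (l+1) → Bool) :
    (Fin.snocEquiv (fun _ => Bool)) (b, s') = Fin.snoc s' b := by
  simp [Fin.snocEquiv]

lemma mass_one (N K : ℕ) (l : ℕ) (ξ : ℤ → ℕ → ℝ) :
    ∀ n : ℤ, ∑ s : Fin (l+1) → Bool, walkMeasure N K n l ξ s = 1 := by
  induction l with
  | zero =>
    intro n
    rw [show (∑ s : Fin 1 → Bool, walkMeasure N K n 0 ξ s)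
        = walkMeasure N K n 0 ξ (fun _ => true) + walkMeasure N K n 0 ξ (fun _ => false) from by
      rw [← Equiv.sum_comp (Equiv.funUnique (Fin 1) Bool).symm, Fintype.sum_bool]; rfl]
    unfold walkMeasure
    rw [Fin.prod_univ_one, Fin.prod_univ_one]
    simp only [Fin.val_zero, zero_add, if_true, if_false, Bool.false_eq_true, pos_top n 0]
    ring
  | succ l ih =>
    intro n
    rw [← Equiv.sum_comp (Fin.snocEquiv (fun _ => Bool)), Fintype.sum_prod_type]
    have : ∀ b : Bool, ∑ s' : Fin (l+1) → Bool,
        walkMeasure N K n (l+1) ξ ((Fin.snocEquiv (fun _ => Bool)) (b, s'))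
        = (if b then 1/2 - lam N K/2 * ξ n (l+2) else 1/2 + lam N K/2 * ξ n (l+2)) := by
      intro b
      calc ∑ s' : Fin (l+1) → Bool,
          walkMeasure N K n (l+1) ξ ((Fin.snocEquiv (fun _ => Bool)) (b, s'))
          = ∑ s' : Fin (l+1) → Bool,
            (if b then 1/2 - lam N K/2 * ξ n (l+2) else 1/2 + lam N K/2 * ξ n (l+2)) *
              walkMeasure N K (n + if b then 1 else -1) l ξ s' := by
            apply Finset.sum_congr rfl
            intro s' _
            rw [snocEquiv_apply, walk_snoc]
        _ = _ := by rw [← Finset.mul_sum, ih, mul_one]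
    rw [Fintype.sum_bool, this true, this false]
    simp only [if_true, if_false, Bool.false_eq_true]
    ring

lemma gridAction_zero (N K : ℕ) (H : ℝ → ℝ → ℝ → ℝ) (c hc : ℝ) (vinit : ℝ → ℝ)
    (n : ℤ) (ξ : ℤ → ℕ → ℝ) :
    gridAction N K H c hc vinit n 0 ξ =
      LegC H c ((n:ℝ) * dx N) 0 (ξ n 1) * dt K + hc * dt K
      + (1/2 - lam N K/2 * ξ n 1) * vinit (((n:ℝ)+1) * dx N)
      + (1/2 + lam N K/2 * ξ n 1) * vinit (((n:ℝ)-1) * dx N) := by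
  have hwm : ∀ b : Bool, walkMeasure N K n 0 ξ (fun _ => b)
      = if b then 1/2 - lam N K/2 * ξ n 1 else 1/2 + lam N K/2 * ξ n 1 := by
    intro b
    unfold walkMeasure
    rw [Fin.prod_univ_one]
    simp only [Fin.val_zero, zero_add, pos_top n 0]
  have hp0 : ∀ b : Bool, pos n 0 (fun _ => b) 0 = n + if b then 1 else -1 := by
    intro b
    unfold pos
    rw [Fin.sum_univ_one]
    norm_num
  have key : ∀ b : Bool, (walkMeasure N K n 0 ξ (fun _ => b) *
      ((∑ k ∈ Finset.Icc 1 1,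
          LegC H c ((pos n 0 (fun _ => b) k : ℝ) * dx N) (((k : ℝ) - 1) * dt K)
            (ξ (pos n 0 (fun _ => b) k) k) * dt K)
        + vinit ((pos n 0 (fun _ => b) 0 : ℝ) * dx N)))
      = (if b then 1/2 - lam N K/2 * ξ n 1 else 1/2 + lam N K/2 * ξ n 1) *
        (LegC H c ((n:ℝ) * dx N) 0 (ξ n 1) * dt K
          + vinit (((n:ℝ) + if b then 1 else -1) * dx N)) := by
    intro b
    rw [hwm b, hp0 b]
    rw [Finset.Icc_self, Finset.sum_singleton]
    simp only [pos_top n 0]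
    norm_num
  unfold gridAction
  rw [show (∑ s : Fin 1 → Bool, walkMeasure N K n 0 ξ s *
        ((∑ k ∈ Finset.Icc 1 1,
          LegC H c ((pos n 0 s k : ℝ) * dx N) (((k : ℝ) - 1) * dt K) (ξ (pos n 0 s k) k) * dt K)
          + vinit ((pos n 0 s 0 : ℝ) * dx N)))
      = (fun s : Fin 1 → Bool => walkMeasure N K n 0 ξ s *
        ((∑ k ∈ Finset.Icc 1 1,
          LegC H c ((pos n 0 s k : ℝ) * dx N) (((k : ℝ) - 1) * dt K) (ξ (pos n 0 s k) k) * dt K)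
          + vinit ((pos n 0 s 0 : ℝ) * dx N))) (fun _ => true)
        + (fun s : Fin 1 → Bool => walkMeasure N K n 0 ξ s *
        ((∑ k ∈ Finset.Icc 1 1,
          LegC H c ((pos n 0 s k : ℝ) * dx N) (((k : ℝ) - 1) * dt K) (ξ (pos n 0 s k) k) * dt K)
          + vinit ((pos n 0 s 0 : ℝ) * dx N))) (fun _ => false) from by
      rw [← Equiv.sum_comp (Equiv.funUnique (Fin 1) Bool).symm, Fintype.sum_bool]; rfl]
  simp only []
  rw [key true, key false]
  simp only [if_true, if_false, Bool.false_eq_true]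
  push_cast
  ring

lemma gridAction_succ (N K : ℕ) (H : ℝ → ℝ → ℝ → ℝ) (c hc : ℝ) (vinit : ℝ → ℝ)
    (n : ℤ) (l : ℕ) (ξ : ℤ → ℕ → ℝ) :
    gridAction N K H c hc vinit n (l+1) ξ =
      LegC H c ((n:ℝ) * dx N) (((l:ℝ)+1) * dt K) (ξ n (l+2)) * dt K + hc * dt K
      + (1/2 - lam N K/2 * ξ n (l+2)) * gridAction N K H c hc vinit (n+1) l ξ
      + (1/2 + lam N K/2 * ξ n (l+2)) * gridAction N K H c hc vinit (n-1) l ξ := by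
  set F : (n' : ℤ) → (l' : ℕ) → (Fin (l'+1) → Bool) → ℝ := fun n' l' s =>
    (∑ k ∈ Finset.Icc 1 (l'+1),
        LegC H c ((pos n' l' s k : ℝ) * dx N) (((k : ℝ) - 1) * dt K)
          (ξ (pos n' l' s k) k) * dt K)
      + vinit ((pos n' l' s 0 : ℝ) * dx N) with hF
  have hFsnoc : ∀ (b : Bool) (s' : Fin (l+1) → Bool),
      F n (l+1) (Fin.snoc s' b)
        = LegC H c ((n:ℝ) * dx N) (((l:ℝ)+1) * dt K) (ξ n (l+2)) * dt K
          + F (n + if b then 1 else -1) l s' := by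
    intro b s'
    rw [hF]
    simp only
    rw [Finset.sum_Icc_succ_top (by omega : 1 ≤ l+1+1)]
    have h1 : ∀ k ∈ Finset.Icc 1 (l+1),
        LegC H c ((pos n (l+1) (Fin.snoc s' b) k : ℝ) * dx N) (((k : ℝ) - 1) * dt K)
          (ξ (pos n (l+1) (Fin.snoc s' b) k) k) * dt K
        = LegC H c ((pos (n + if b then 1 else -1) l s' k : ℝ) * dx N) (((k : ℝ) - 1) * dt K)
          (ξ (pos (n + if b then 1 else -1) l s' k) k) * dt K := by
      intro k hk
      rw [Finset.mem_Icc] at hk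
      rw [pos_snoc n l s' b k (by omega)]
    rw [Finset.sum_congr rfl h1]
    rw [pos_top n (l+1) (Fin.snoc s' b), pos_snoc n l s' b 0 (by omega)]
    simp only [show l+1+1 = l+2 from rfl]
    rw [show (((l+2 : ℕ) : ℝ) - 1) = (l:ℝ)+1 from by push_cast; ring]
    ring
  have hmass : ∀ n' : ℤ, ∑ s' : Fin (l+1) → Bool, walkMeasure N K n' l ξ s' = 1 :=
    mass_one N K l ξ
  have hGA : ∀ n' : ℤ, ∑ s' : Fin (l+1) → Bool, walkMeasure N K n' l ξ s' * F n' l s'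
      = gridAction N K H c hc vinit n' l ξ - hc * (((l:ℝ)+1) * dt K) := by
    intro n'
    rw [hF]
    unfold gridAction
    simp only
    ring
  have hbterm : ∀ b : Bool,
      (∑ s' : Fin (l+1) → Bool,
        walkMeasure N K n (l+1) ξ ((Fin.snocEquiv (fun _ => Bool)) (b, s'))
          * F n (l+1) ((Fin.snocEquiv (fun _ => Bool)) (b, s')))
      = (if b then 1/2 - lam N K/2 * ξ n (l+2) else 1/2 + lam N K/2 * ξ n (l+2)) *
          (LegC H c ((n:ℝ) * dx N) (((l:ℝ)+1) * dt K) (ξ n (l+2)) * dt K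
            + gridAction N K H c hc vinit (n + if b then 1 else -1) l ξ
            - hc * (((l:ℝ)+1) * dt K)) := by
    intro b
    have : ∀ s' : Fin (l+1) → Bool,
        walkMeasure N K n (l+1) ξ ((Fin.snocEquiv (fun _ => Bool)) (b, s'))
          * F n (l+1) ((Fin.snocEquiv (fun _ => Bool)) (b, s'))
        = (if b then 1/2 - lam N K/2 * ξ n (l+2) else 1/2 + lam N K/2 * ξ n (l+2)) *
          (walkMeasure N K (n + if b then 1 else -1) l ξ s'
            * (LegC H c ((n:ℝ) * dx N) (((l:ℝ)+1) * dt K) (ξ n (l+2)) * dt K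
                + F (n + if b then 1 else -1) l s')) := by
      intro s'
      rw [snocEquiv_apply, walk_snoc, hFsnoc]
      ring
    rw [Finset.sum_congr rfl (fun s' _ => this s')]
    rw [← Finset.mul_sum]
    congr 1
    have : ∀ s' : Fin (l+1) → Bool,
        walkMeasure N K (n + if b then 1 else -1) l ξ s'
          * (LegC H c ((n:ℝ) * dx N) (((l:ℝ)+1) * dt K) (ξ n (l+2)) * dt K
              + F (n + if b then 1 else -1) l s')
        = LegC H c ((n:ℝ) * dx N) (((l:ℝ)+1) * dt K) (ξ n (l+2)) * dt K
            * walkMeasure N K (n + if b then 1 else -1) l ξ s'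
          + walkMeasure N K (n + if b then 1 else -1) l ξ s'
              * F (n + if b then 1 else -1) l s' := by
      intro s'; ring
    rw [Finset.sum_congr rfl (fun s' _ => this s'), Finset.sum_add_distrib,
      ← Finset.mul_sum, hmass, hGA]
    ring
  have expand : gridAction N K H c hc vinit n (l+1) ξ
      = (∑ s' : Fin (l+1) → Bool,
          walkMeasure N K n (l+1) ξ ((Fin.snocEquiv (fun _ => Bool)) (true, s'))
            * F n (l+1) ((Fin.snocEquiv (fun _ => Bool)) (true, s')))
        + (∑ s' : Fin (l+1) → Bool,
          walkMeasure N K n (l+1) ξ ((Fin.snocEquiv (fun _ => Bool)) (false, s'))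
            * F n (l+1) ((Fin.snocEquiv (fun _ => Bool)) (false, s')))
        + hc * ((((l:ℕ)+1 : ℝ)+1) * dt K) := by
    unfold gridAction
    rw [← Equiv.sum_comp (Fin.snocEquiv (fun _ => Bool))
      (fun s => walkMeasure N K n (l+1) ξ s * F n (l+1) s), Fintype.sum_prod_type,
      Fintype.sum_bool]
    push_cast
    ring
  rw [expand, hbterm true, hbterm false]
  simp only [if_true, if_false, Bool.false_eq_true]
  push_cast
  ring

/-! ### The optimal velocity field -/

/-- The discrete spatial slope `D_x v_{m+1}^k`. -/
def Dxv (N : ℕ) (v : ℤ → ℕ → ℝ) (m : ℤ) (k : ℕ) : ℝ :=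
  (v (m + 1) k - v (m - 1) k) / (2 * dx N)

/-- The optimal velocity field `ξ*`. -/
def xistar (N K : ℕ) (H : ℝ → ℝ → ℝ → ℝ) (c : ℝ) (kstar : ℕ) (v : ℤ → ℕ → ℝ)
    (m : ℤ) (k : ℕ) : ℝ :=
  if 1 ≤ k ∧ k ≤ kstar + 1 ∧ Even (m + (k:ℤ) + 1)
  then deriv (H ((m:ℝ) * dx N) (((k - 1 : ℕ) : ℝ) * dt K)) (c + Dxv N v m (k-1)) else 0

lemma xistar_eval (N K : ℕ) (H : ℝ → ℝ → ℝ → ℝ) (c : ℝ) (kstar : ℕ) (v : ℤ → ℕ → ℝ)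
    (m : ℤ) (k : ℕ) (h2 : k + 1 ≤ kstar + 1) (h3 : Even (m + (k:ℤ))) :
    xistar N K H c kstar v m (k+1)
      = deriv (H ((m:ℝ) * dx N) ((k:ℝ) * dt K)) (c + Dxv N v m k) := by
  unfold xistar
  rw [if_pos]
  · simp [Nat.add_sub_cancel]
  · refine ⟨by omega, by omega, ?_⟩
    obtain ⟨r, hr⟩ := h3
    exact ⟨r + 1, by push_cast; omega⟩


lemma dx_pos (N : ℕ) (hN : 0 < N) : 0 < dx N := by
  have : (0:ℝ) < (N:ℝ) := by exact_mod_cast hN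
  unfold dx; positivity

lemma dt_pos (K : ℕ) (hK : 0 < K) : 0 < dt K := by
  have : (0:ℝ) < (K:ℝ) := by exact_mod_cast hK
  unfold dt; positivity

lemma lam_pos (N K : ℕ) (hN : 0 < N) (hK : 0 < K) : 0 < lam N K :=
  div_pos (dt_pos K hK) (dx_pos N hN)

lemma xistar_adm (N K : ℕ) (hN : 0 < N) (hK : 0 < K) (H : ℝ → ℝ → ℝ → ℝ) (c : ℝ)
    (kstar : ℕ) (v : ℤ → ℕ → ℝ)
    (hCFL : ∀ (m : ℤ) (k : ℕ), k ≤ kstar → Even (m + (k : ℤ)) →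
      |deriv (H ((m : ℝ) * dx N) ((k : ℝ) * dt K))
          (c + (v (m + 1) k - v (m - 1) k) / (2 * dx N))| < (lam N K)⁻¹) :
    Adm N K (xistar N K H c kstar v) := by
  intro m k
  unfold xistar
  split_ifs with h
  · obtain ⟨h1, h2, h3⟩ := h
    have hpar : Even (m + ((k - 1 : ℕ) : ℤ)) := by
      obtain ⟨r, hr⟩ := h3
      exact ⟨r - 1, by omega⟩
    have := hCFL m (k-1) (by omega) hpar
    unfold Dxv
    exact this.le
  · simp only [abs_zero]
    exact inv_nonneg.2 (lam_pos N K hN hK).le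

lemma onestep (N K : ℕ) (hN : 0 < N) (hK : 0 < K) (H : ℝ → ℝ → ℝ → ℝ) (c hc : ℝ)
    (v : ℤ → ℕ → ℝ) (m : ℤ) (k : ℕ)
    (hsch : (v m (k + 1) - (v (m - 1) k + v (m + 1) k) / 2) / dt K
      + H ((m:ℝ) * dx N) ((k:ℝ) * dt K) (c + (v (m + 1) k - v (m - 1) k) / (2 * dx N)) = hc)
    (t : ℝ) (ht : t = (k:ℝ) * dt K) (ξv : ℝ) :
    LegC H c ((m:ℝ) * dx N) t ξv * dt K + hc * dt K
      + (1/2 - lam N K/2 * ξv) * v (m+1) k + (1/2 + lam N K/2 * ξv) * v (m-1) k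
    = v m (k+1) + dt K * (Leg H ((m:ℝ) * dx N) t ξv
        - ξv * (c + Dxv N v m k)
        + H ((m:ℝ) * dx N) t (c + Dxv N v m k)) := by
  subst ht
  have hdx := dx_pos N hN
  have hdt := dt_pos K hK
  unfold LegC Dxv
  set HH := H ((m:ℝ) * dx N) ((k:ℝ) * dt K)
      (c + (v (m + 1) k - v (m - 1) k) / (2 * dx N)) with hHH
  set LL := Leg H ((m:ℝ) * dx N) ((k:ℝ) * dt K) ξv with hLL
  have hv : v m (k+1) = (v (m-1) k + v (m+1) k)/2 + dt K * hc - dt K * HH := by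
    have h3 : (v m (k + 1) - (v (m - 1) k + v (m + 1) k) / 2) / dt K = hc - HH := by
      linarith
    rw [div_eq_iff hdt.ne'] at h3
    linarith [h3]
  rw [hv]
  unfold lam
  field_simp
  ring


lemma DP (N K : ℕ) (hN : 0 < N) (hK : 0 < K) (H : ℝ → ℝ → ℝ → ℝ)
    (hH_C2 : ContDiff ℝ 2 (fun q : ℝ × ℝ × ℝ => H q.1 q.2.1 q.2.2))
    (hH_conv : ∀ x t p, 0 < deriv (deriv (H x t)) p)
    (hH_sl : ∀ x t, Filter.Tendsto (fun p => H x t p / |p|)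
      (Filter.comap abs Filter.atTop) Filter.atTop)
    (c hc : ℝ) (vinit : ℝ → ℝ) (v : ℤ → ℕ → ℝ) (kstar : ℕ)
    (hv0 : ∀ m : ℤ, Odd m → v m 0 = vinit ((m : ℝ) * dx N))
    (hsch : ∀ (m : ℤ) (k : ℕ), Even (m + (k : ℤ)) →
      (v m (k + 1) - (v (m - 1) k + v (m + 1) k) / 2) / dt K
        + H ((m : ℝ) * dx N) ((k : ℝ) * dt K)
            (c + (v (m + 1) k - v (m - 1) k) / (2 * dx N)) = hc)
    (hCFL : ∀ (m : ℤ) (k : ℕ), k ≤ kstar → Even (m + (k : ℤ)) →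
      |deriv (H ((m : ℝ) * dx N) ((k : ℝ) * dt K))
          (c + (v (m + 1) k - v (m - 1) k) / (2 * dx N))| < (lam N K)⁻¹) :
    ∀ l : ℕ, ∀ n : ℤ, Odd (n + (l : ℤ) + 1) → l + 1 ≤ kstar + 1 →
      (∀ ξ, Adm N K ξ → v n (l + 1) ≤ gridAction N K H c hc vinit n l ξ) ∧
      gridAction N K H c hc vinit n l (xistar N K H c kstar v) = v n (l + 1) ∧
      (∀ ξ, Adm N K ξ → gridAction N K H c hc vinit n l ξ = v n (l + 1) →
        ∀ m k, inG n l m k → ξ m k = xistar N K H c kstar v m k) := by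
  intro l
  have hdt := dt_pos K hK
  have hdx := dx_pos N hN
  have hlam := lam_pos N K hN hK
  induction l with
  | zero =>
    intro n hodd hl
    simp only [zero_add]
    have hne : Even (n + ((0:ℕ):ℤ)) := by
      obtain ⟨r, hr⟩ := hodd
      exact ⟨r, by push_cast at hr ⊢; omega⟩
    have hoddp : Odd (n + 1) := by
      obtain ⟨r, hr⟩ := hodd
      exact ⟨r, by push_cast at hr ⊢; omega⟩
    have hoddm : Odd (n - 1) := by
      obtain ⟨r, hr⟩ := hodd
      exact ⟨r - 1, by push_cast at hr ⊢; omega⟩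
    have hv0p : vinit (((n:ℝ)+1) * dx N) = v (n+1) 0 := by
      rw [hv0 (n+1) hoddp]
      congr 1
      push_cast
      ring
    have hv0m : vinit (((n:ℝ)-1) * dx N) = v (n-1) 0 := by
      rw [hv0 (n-1) hoddm]
      congr 1
      push_cast
      ring
    have hones := fun ξv => onestep N K hN hK H c hc v n 0 (hsch n 0 hne) 0 (by norm_num) ξv
    have key : ∀ ξ : ℤ → ℕ → ℝ, gridAction N K H c hc vinit n 0 ξ
        = v n 1 + dt K * (Leg H ((n:ℝ) * dx N) 0 (ξ n 1) - (ξ n 1) * (c + Dxv N v n 0) + H ((n:ℝ) * dx N) 0 (c + Dxv N v n 0)) := by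
      intro ξ
      rw [gridAction_zero, hv0p, hv0m]
      have h1 := hones (ξ n 1)
      linarith [h1]
    have Epos : ∀ ξv : ℝ, 0 ≤ Leg H ((n:ℝ) * dx N) 0 ξv - ξv * (c + Dxv N v n 0) + H ((n:ℝ) * dx N) 0 (c + Dxv N v n 0) := by
      intro ξv
      have := dualIneq hH_C2 hH_sl ((n:ℝ) * dx N) 0 ξv (c + Dxv N v n 0)
      linarith
    have Estar : Leg H ((n:ℝ) * dx N) 0 (deriv (H ((n:ℝ) * dx N) 0) (c + Dxv N v n 0))
        - (deriv (H ((n:ℝ) * dx N) 0) (c + Dxv N v n 0)) * (c + Dxv N v n 0) + H ((n:ℝ) * dx N) 0 (c + Dxv N v n 0) = 0 := by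
      have := dualEq hH_C2 hH_conv hH_sl ((n:ℝ) * dx N) 0 (c + Dxv N v n 0)
      linarith
    have Euniq : ∀ ξv : ℝ, Leg H ((n:ℝ) * dx N) 0 ξv - ξv * (c + Dxv N v n 0) + H ((n:ℝ) * dx N) 0 (c + Dxv N v n 0) = 0 →
        ξv = deriv (H ((n:ℝ) * dx N) 0) (c + Dxv N v n 0) := by
      intro ξv h
      exact dualUnique hH_C2 hH_sl ((n:ℝ) * dx N) 0 ξv (c + Dxv N v n 0) (by linarith)
    have hxs : xistar N K H c kstar v n 1 = deriv (H ((n:ℝ) * dx N) 0) (c + Dxv N v n 0) := by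
      have := xistar_eval N K H c kstar v n 0 (by omega) hne
      simp only [Nat.cast_zero, zero_mul] at this
      exact this
    refine ⟨?_, ?_, ?_⟩
    · intro ξ hξ
      rw [key ξ]
      have := mul_nonneg hdt.le (Epos (ξ n 1))
      linarith
    · rw [key _, hxs, Estar]
      ring
    · intro ξ hξ heq m k hmk
      obtain ⟨h1k, h2k, h3k, h4k⟩ := hmk
      rw [abs_le] at h4k
      have hk1 : k = 1 := by omega
      subst hk1
      have hmn : m = n := by
        push_cast at h4k
        omega
      rw [key ξ] at heq
      have h5 : dt K * (Leg H ((n:ℝ) * dx N) 0 (ξ n 1) - (ξ n 1) * (c + Dxv N v n 0) + H ((n:ℝ) * dx N) 0 (c + Dxv N v n 0)) = 0 := by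
        linarith
      have h6 := (mul_eq_zero.mp h5).resolve_left hdt.ne'
      rw [hmn, hxs]
      exact Euniq _ h6
  | succ l ih =>
    intro n hodd hl
    have hpar : Even (n + ((l+1:ℕ):ℤ)) := by
      obtain ⟨r, hr⟩ := hodd
      exact ⟨r, by push_cast at hr ⊢; omega⟩
    have hoddp : Odd ((n+1) + (l:ℤ) + 1) := by
      obtain ⟨r, hr⟩ := hodd
      exact ⟨r, by push_cast at hr ⊢; omega⟩
    have hoddm : Odd ((n-1) + (l:ℤ) + 1) := by
      obtain ⟨r, hr⟩ := hodd
      exact ⟨r - 1, by push_cast at hr ⊢; omega⟩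
    have ihp := ih (n+1) hoddp (by omega)
    have ihm := ih (n-1) hoddm (by omega)
    have hones := fun ξv => onestep N K hN hK H c hc v n (l+1) (hsch n (l+1) hpar)
      (((l:ℝ)+1) * dt K) (by push_cast; ring) ξv
    have Epos : ∀ ξv : ℝ, 0 ≤ Leg H ((n:ℝ) * dx N) (((l:ℝ)+1) * dt K) ξv - ξv * (c + Dxv N v n (l+1)) + H ((n:ℝ) * dx N) (((l:ℝ)+1) * dt K) (c + Dxv N v n (l+1)) := by
      intro ξv
      have := dualIneq hH_C2 hH_sl ((n:ℝ) * dx N) (((l:ℝ)+1) * dt K) ξv (c + Dxv N v n (l+1))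
      linarith
    have Estar : Leg H ((n:ℝ) * dx N) (((l:ℝ)+1) * dt K) (deriv (H ((n:ℝ) * dx N) (((l:ℝ)+1) * dt K)) (c + Dxv N v n (l+1)))
        - (deriv (H ((n:ℝ) * dx N) (((l:ℝ)+1) * dt K)) (c + Dxv N v n (l+1))) * (c + Dxv N v n (l+1)) + H ((n:ℝ) * dx N) (((l:ℝ)+1) * dt K) (c + Dxv N v n (l+1)) = 0 := by
      have := dualEq hH_C2 hH_conv hH_sl ((n:ℝ) * dx N) (((l:ℝ)+1) * dt K) (c + Dxv N v n (l+1))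
      linarith
    have Euniq : ∀ ξv : ℝ, Leg H ((n:ℝ) * dx N) (((l:ℝ)+1) * dt K) ξv - ξv * (c + Dxv N v n (l+1)) + H ((n:ℝ) * dx N) (((l:ℝ)+1) * dt K) (c + Dxv N v n (l+1)) = 0 →
        ξv = deriv (H ((n:ℝ) * dx N) (((l:ℝ)+1) * dt K)) (c + Dxv N v n (l+1)) := by
      intro ξv h
      exact dualUnique hH_C2 hH_sl ((n:ℝ) * dx N) (((l:ℝ)+1) * dt K) ξv (c + Dxv N v n (l+1)) (by linarith)
    have hxs : xistar N K H c kstar v n (l+2) = deriv (H ((n:ℝ) * dx N) (((l:ℝ)+1) * dt K)) (c + Dxv N v n (l+1)) := by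
      have := xistar_eval N K H c kstar v n (l+1) (by omega) hpar
      push_cast at this
      exact this
    have hhalf : ∀ ξ : ℤ → ℕ → ℝ, Adm N K ξ → |lam N K / 2 * ξ n (l+2)| ≤ 1/2 := by
      intro ξ hξ
      rw [abs_mul, abs_of_pos (by positivity : (0:ℝ) < lam N K / 2)]
      calc lam N K / 2 * |ξ n (l+2)| ≤ lam N K / 2 * (lam N K)⁻¹ :=
            mul_le_mul_of_nonneg_left (hξ n (l+2)) (by positivity)
        _ = 1/2 := by
            rw [div_mul_eq_mul_div, mul_inv_cancel₀ (lam_pos N K hN hK).ne']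
    refine ⟨?_, ?_, ?_⟩
    · intro ξ hξ
      rw [gridAction_succ]
      have hcp : 0 ≤ 1/2 - lam N K/2 * ξ n (l+2) := by
        have := abs_le.mp (hhalf ξ hξ)
        linarith [this.2]
      have hcm : 0 ≤ 1/2 + lam N K/2 * ξ n (l+2) := by
        have := abs_le.mp (hhalf ξ hξ)
        linarith [this.1]
      have hA := ihp.1 ξ hξ
      have hB := ihm.1 ξ hξ
      have e1 := mul_le_mul_of_nonneg_left hA hcp
      have e2 := mul_le_mul_of_nonneg_left hB hcm
      have h1 := hones (ξ n (l+2))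
      have e3 := mul_nonneg hdt.le (Epos (ξ n (l+2)))
      linarith
    · rw [gridAction_succ, hxs, ihp.2.1, ihm.2.1]
      have h1 := hones (deriv (H ((n:ℝ) * dx N) (((l:ℝ)+1) * dt K)) (c + Dxv N v n (l+1)))
      rw [Estar, mul_zero, add_zero] at h1
      linarith
    · intro ξ hξ heq m k hmk
      rw [gridAction_succ] at heq
      have hcp : 0 ≤ 1/2 - lam N K/2 * ξ n (l+2) := by
        have := abs_le.mp (hhalf ξ hξ)
        linarith [this.2]
      have hcm : 0 ≤ 1/2 + lam N K/2 * ξ n (l+2) := by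
        have := abs_le.mp (hhalf ξ hξ)
        linarith [this.1]
      have hA := ihp.1 ξ hξ
      have hB := ihm.1 ξ hξ
      have e1 := mul_le_mul_of_nonneg_left hA hcp
      have e2 := mul_le_mul_of_nonneg_left hB hcm
      have h1 := hones (ξ n (l+2))
      have e3 := mul_nonneg hdt.le (Epos (ξ n (l+2)))
      have h5 : dt K * (Leg H ((n:ℝ) * dx N) (((l:ℝ)+1) * dt K) (ξ n (l+2)) - (ξ n (l+2)) * (c + Dxv N v n (l+1)) + H ((n:ℝ) * dx N) (((l:ℝ)+1) * dt K) (c + Dxv N v n (l+1))) = 0 := by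
        linarith
      have hE0 := (mul_eq_zero.mp h5).resolve_left hdt.ne'
      have hxieq : ξ n (l+2) = deriv (H ((n:ℝ) * dx N) (((l:ℝ)+1) * dt K)) (c + Dxv N v n (l+1)) := Euniq _ hE0
      rw [hE0, mul_zero, add_zero] at h1
      have hstrict : |deriv (H ((n:ℝ) * dx N) (((l:ℝ)+1) * dt K)) (c + Dxv N v n (l+1))| < (lam N K)⁻¹ := by
        have hc2 := hCFL n (l+1) (by omega) hpar
        push_cast at hc2
        unfold Dxv
        exact hc2
      have hinv : lam N K / 2 * (lam N K)⁻¹ = 1/2 := by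
        rw [div_mul_eq_mul_div, mul_inv_cancel₀ hlam.ne']
      have habs := abs_lt.mp hstrict
      have hcp0 : 0 < 1/2 - lam N K/2 * ξ n (l+2) := by
        rw [hxieq]
        have := mul_lt_mul_of_pos_left habs.2 (by positivity : (0:ℝ) < lam N K / 2)
        linarith [this, hinv]
      have hcm0 : 0 < 1/2 + lam N K/2 * ξ n (l+2) := by
        rw [hxieq]
        have := mul_lt_mul_of_pos_left habs.1 (by positivity : (0:ℝ) < lam N K / 2)
        have hneg : lam N K/2 * -(lam N K)⁻¹ = -(lam N K/2 * (lam N K)⁻¹) := by ring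
        linarith [this, hinv, hneg]
      have h7 : (1/2 - lam N K/2 * ξ n (l+2)) * gridAction N K H c hc vinit (n+1) l ξ
          = (1/2 - lam N K/2 * ξ n (l+2)) * v (n+1) (l+1) := by
        linarith
      have h8 : (1/2 + lam N K/2 * ξ n (l+2)) * gridAction N K H c hc vinit (n-1) l ξ
          = (1/2 + lam N K/2 * ξ n (l+2)) * v (n-1) (l+1) := by
        linarith
      have hgAp : gridAction N K H c hc vinit (n+1) l ξ = v (n+1) (l+1) :=
        mul_left_cancel₀ hcp0.ne' h7
      have hgAm : gridAction N K H c hc vinit (n-1) l ξ = v (n-1) (l+1) :=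
        mul_left_cancel₀ hcm0.ne' h8
      obtain ⟨h1k, h2k, h3k, h4k⟩ := hmk
      by_cases hktop : k = l + 2
      · subst hktop
        have hmn : m = n := by
          rw [abs_le] at h4k
          push_cast at h4k
          omega
        subst hmn
        exact hxieq.trans hxs.symm
      · have p1 : (m + (k:ℤ)) % 2 = 1 := Int.odd_iff.mp h3k
        have p2 : (n + ((l+1:ℕ):ℤ) + 1) % 2 = 1 := Int.odd_iff.mp hodd
        rw [abs_le] at h4k
        have hchild : inG (n+1) l m k ∨ inG (n-1) l m k := by
          by_cases hge : n + 1 ≤ m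
          · left
            exact ⟨h1k, by omega, h3k, by rw [abs_le]; omega⟩
          · by_cases hle : m ≤ n - 1
            · right
              exact ⟨h1k, by omega, h3k, by rw [abs_le]; omega⟩
            · left
              exact ⟨h1k, by omega, h3k, by rw [abs_le]; omega⟩
        rcases hchild with h | h
        · exact ihp.2.2 ξ hξ hgAp m k h
        · exact ihm.2.2 ξ hξ hgAm m k h

/-- Proposition 2.2: if `v` solves the Hamilton–Jacobi scheme (2.3) and
`u_m^k = D_x v_{m+1}^k` satisfies the CFL condition up to time step `k*`, then `v_n^{l+1}`
is the infimum of the discrete stochastic action `E_n^{l+1}(ξ)` over velocity fields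
`ξ : G → [-λ⁻¹, λ⁻¹]`, and the minimizing velocity field exists, is unique (on `G`) and is
given by `ξ*_m^{k+1} = H_p(x_m, t_k, c + D_x v_{m+1}^k)`. -/
theorem scheme_solution_is_stochastic_value
    (N K : ℕ) (hN : 0 < N) (hK : 0 < K)
    (H : ℝ → ℝ → ℝ → ℝ)
    (hH_C2 : ContDiff ℝ 2 (fun q : ℝ × ℝ × ℝ => H q.1 q.2.1 q.2.2))
    (hH_perx : ∀ x t p, H (x + 1) t p = H x t p)
    (hH_pert : ∀ x t p, H x (t + 1) p = H x t p)
    (hH_conv : ∀ x t p, 0 < deriv (deriv (H x t)) p)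
    (hH_sl : ∀ x t, Filter.Tendsto (fun p => H x t p / |p|)
      (Filter.comap abs Filter.atTop) Filter.atTop)
    (c0 c1 c : ℝ) (hc : c ∈ Set.Icc c0 c1) (hFun : ℝ → ℝ)
    (r : ℝ) (hr : 0 < r) (u0 v0 : ℝ → ℝ)
    (hu0_int : ∀ a b : ℝ, IntervalIntegrable u0 MeasureTheory.volume a b)
    (hu0_per : ∀ y, u0 (y + 1) = u0 y)
    (hu0_mean : (∫ y in (0:ℝ)..1, u0 y) = 0)
    (hu0_bd : ∀ y, |u0 y| ≤ r)
    (hv0_bd : ∀ y, |v0 y| ≤ r)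
    (hv0_deriv : ∀ x, v0 x = v0 0 + ∫ y in (0:ℝ)..x, u0 y)
    (v : ℤ → ℕ → ℝ) (kstar : ℕ)
    (hsol : SolvesHJ N K H c (hFun c) (vD0 N u0 v0) v)
    (hCFL : ∀ (m : ℤ) (k : ℕ), k ≤ kstar → Even (m + (k : ℤ)) →
      |deriv (H ((m : ℝ) * dx N) ((k : ℝ) * dt K))
          (c + (v (m + 1) k - v (m - 1) k) / (2 * dx N))| < (lam N K)⁻¹)
    (n : ℤ) (l : ℕ) (hodd : Odd (n + (l : ℤ) + 1)) (hl : l + 1 ≤ kstar + 1) :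
    v n (l + 1)
        = sInf {y | ∃ ξ, Adm N K ξ ∧ y = gridAction N K H c (hFun c) (vD0 N u0 v0) n l ξ} ∧
      ∃ ξs : ℤ → ℕ → ℝ, Adm N K ξs ∧
        gridAction N K H c (hFun c) (vD0 N u0 v0) n l ξs = v n (l + 1) ∧
        (∀ (m : ℤ) (k : ℕ), inG n l m (k + 1) →
          ξs m (k + 1) = deriv (H ((m : ℝ) * dx N) ((k : ℝ) * dt K))
            (c + (v (m + 1) k - v (m - 1) k) / (2 * dx N))) ∧
        (∀ ξ' : ℤ → ℕ → ℝ, Adm N K ξ' →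
          gridAction N K H c (hFun c) (vD0 N u0 v0) n l ξ' = v n (l + 1) →
          ∀ (m : ℤ) (k : ℕ), inG n l m k → ξ' m k = ξs m k) := by
  have hadm := xistar_adm N K hN hK H c kstar v hCFL
  obtain ⟨hlow, heqstar, huniq⟩ :=
    DP N K hN hK H hH_C2 hH_conv hH_sl c (hFun c) (vD0 N u0 v0) v kstar
      hsol.1 (fun m k hp => hsol.2.2 m k hp) hCFL l n hodd hl
  constructor
  · apply le_antisymm
    · refine le_csInf ⟨_, ⟨xistar N K H c kstar v, hadm, rfl⟩⟩ ?_
      rintro y ⟨ξ, hξ, rfl⟩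
      exact hlow ξ hξ
    · apply csInf_le
      · refine ⟨v n (l+1), ?_⟩
        rintro y ⟨ξ, hξ, rfl⟩
        exact hlow ξ hξ
      · exact ⟨xistar N K H c kstar v, hadm, heqstar.symm⟩
  · refine ⟨xistar N K H c kstar v, hadm, heqstar, ?_, ?_⟩
    · intro m k hmk
      obtain ⟨h1, h2, h3, h4⟩ := hmk
      have hpar : Even (m + (k:ℤ)) := by
        obtain ⟨r, hr⟩ := h3
        exact ⟨r, by push_cast at hr ⊢; omega⟩
      have := xistar_eval N K H c kstar v m k (by omega) hpar
      rw [this]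
      unfold Dxv
      rfl
    · intro ξ' hξ' heq m k hmk
      exact huniq ξ' hξ' heq m k hmk
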